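/- Let b ≥ 5 be odd and ε, α > 0 with α = o(ε^q) as ε → 0 (q = b/2). For the square R = [ε^q, ε^q + α] × [ε − α, ε], the weighted area A(∂R) = ∫_{ε−α}^{ε} ∫_{ε^q}^{ε^q+α} 4x₁ (x₁² − x₂^b) dx₁ dx₂ satisfies |A(∂R)| = 4 α³ ε^b (1 + o(1)); in particular |A(∂R)| ≥ 2 α³ ε^b for all sufficiently small ε. -/

import Mathlib

set_option maxHeartbeats 1000000
open Real Set Filter MeasureTheory Asymptotics intervalIntegral

lemma int1 (l u c : ℝ) :
    ∫ x in l..u, 4 * x * (x ^ 2 - c) = (u ^ 4 - 2 * c * u ^ 2) - (l ^ 4 - 2 * c * l ^ 2) := by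
  have h : ∀ x ∈ Set.uIcc l u, HasDerivAt (fun x : ℝ => x ^ 4 - 2 * c * x ^ 2)
      (4 * x * (x ^ 2 - c)) x := by
    intro x _
    have h := (hasDerivAt_pow 4 x).sub ((hasDerivAt_pow 2 x).const_mul (2 * c))
    refine h.congr_deriv ?_
    push_cast; ring
  rw [intervalIntegral.integral_eq_sub_of_hasDerivAt h
    (Continuous.intervalIntegrable (by continuity) _ _)]

lemma int2 (l u C D : ℝ) (b : ℕ) :
    ∫ x in l..u, (C - D * x ^ b)
      = C * (u - l) - D * (u ^ (b + 1) - l ^ (b + 1)) / (b + 1) := by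
  have hb : ((b : ℝ) + 1) ≠ 0 := by positivity
  have h : ∀ x ∈ Set.uIcc l u, HasDerivAt
      (fun x : ℝ => C * x - D * x ^ (b + 1) / (b + 1)) (C - D * x ^ b) x := by
    intro x _
    have h := ((hasDerivAt_id x).const_mul C).sub
      (((hasDerivAt_pow (b + 1) x).const_mul D).div_const ((b : ℝ) + 1))
    refine h.congr_deriv ?_
    field_simp
    rw [Nat.add_sub_cancel]; push_cast
    ring
  rw [intervalIntegral.integral_eq_sub_of_hasDerivAt h
    (Continuous.intervalIntegrable (by continuity) _ _)]
  ring

lemma int3 (a β l u : ℝ) (b : ℕ) :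
    ∫ x₂ in l..u, ∫ x₁ in a..(a + β), 4 * x₁ * (x₁ ^ 2 - x₂ ^ b)
      = ((a + β) ^ 4 - a ^ 4) * (u - l)
        - (2 * ((a + β) ^ 2 - a ^ 2)) * (u ^ (b + 1) - l ^ (b + 1)) / (b + 1) := by
  have h : ∀ x₂ : ℝ, ∫ x₁ in a..(a + β), 4 * x₁ * (x₁ ^ 2 - x₂ ^ b)
      = ((a + β) ^ 4 - a ^ 4) - (2 * ((a + β) ^ 2 - a ^ 2)) * x₂ ^ b := by
    intro x₂; rw [int1]; ring
  simp only [h, int2]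

lemma pow_sub_pow_le_right (n : ℕ) {u v : ℝ} (hv : 0 ≤ v) (huv : v ≤ u) :
    u ^ (n + 1) - v ^ (n + 1) ≤ (n + 1) * u ^ n * (u - v) := by
  induction n with
  | zero => simp
  | succ n ih =>
    have hu : 0 ≤ u := hv.trans huv
    have hvu : v ^ (n + 1) ≤ u ^ (n + 1) := pow_le_pow_left₀ hv huv _
    have key : u ^ (n + 2) - v ^ (n + 2)
        = u * (u ^ (n + 1) - v ^ (n + 1)) + v ^ (n + 1) * (u - v) := by ring
    rw [key]
    push_cast
    have h1 : u * (u ^ (n + 1) - v ^ (n + 1)) ≤ u * (((n : ℝ) + 1) * u ^ n * (u - v)) :=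
      mul_le_mul_of_nonneg_left ih hu
    have h2 : v ^ (n + 1) * (u - v) ≤ u ^ (n + 1) * (u - v) :=
      mul_le_mul_of_nonneg_right hvu (sub_nonneg.mpr huv)
    have h3 : u * (((n : ℝ) + 1) * u ^ n * (u - v)) + u ^ (n + 1) * (u - v)
        = ((n : ℝ) + 1 + 1) * u ^ (n + 1) * (u - v) := by rw [pow_succ]; ring
    linarith

lemma pow_sub_pow_ge_left (n : ℕ) {u v : ℝ} (hv : 0 ≤ v) (huv : v ≤ u) :
    (n + 1) * v ^ n * (u - v) ≤ u ^ (n + 1) - v ^ (n + 1) := by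
  induction n with
  | zero => simp
  | succ n ih =>
    have hu : 0 ≤ u := hv.trans huv
    have hvu : v ^ (n + 1) ≤ u ^ (n + 1) := pow_le_pow_left₀ hv huv _
    have key : u ^ (n + 2) - v ^ (n + 2)
        = v * (u ^ (n + 1) - v ^ (n + 1)) + u ^ (n + 1) * (u - v) := by ring
    rw [key]
    push_cast
    have h1 : v * (((n : ℝ) + 1) * v ^ n * (u - v)) ≤ v * (u ^ (n + 1) - v ^ (n + 1)) :=
      mul_le_mul_of_nonneg_left ih hv
    have h2 : v ^ (n + 1) * (u - v) ≤ u ^ (n + 1) * (u - v) :=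
      mul_le_mul_of_nonneg_right hvu (sub_nonneg.mpr huv)
    have h3 : v * (((n : ℝ) + 1) * v ^ n * (u - v)) + v ^ (n + 1) * (u - v)
        = ((n : ℝ) + 1 + 1) * v ^ (n + 1) * (u - v) := by rw [pow_succ]; ring
    linarith

/-- for `b ≥ 5` odd, `q = b/2`, and `α = α(ε) > 0` with `α = o(ε^q)` as
`ε → 0⁺`, the weighted area of the boundary of the square
`R = [ε^q, ε^q + α] × [ε − α, ε]`, namely
`A(∂R) = ∫∫_R 4x₁(x₁² − x₂^b)`, satisfies `|A(∂R)| = 4α³ε^b(1 + o(1))`;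
in particular `|A(∂R)| ≥ 2α³ε^b` for all sufficiently small `ε > 0`. -/
theorem stmt9 (b : ℕ) (hb : 5 ≤ b) (hodd : Odd b) (q : ℝ) (hq : q = (b : ℝ) / 2)
    (α : ℝ → ℝ) (hαpos : ∀ ε : ℝ, 0 < ε → 0 < α ε)
    (hα : α =o[nhdsWithin 0 (Set.Ioi 0)] fun ε : ℝ => ε ^ q) :
    ((fun ε : ℝ =>
        |∫ x₂ in (ε - α ε)..ε, ∫ x₁ in (ε ^ q)..(ε ^ q + α ε),
            4 * x₁ * (x₁ ^ 2 - x₂ ^ b)|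
          - 4 * (α ε) ^ 3 * ε ^ b)
      =o[nhdsWithin 0 (Set.Ioi 0)] fun ε : ℝ => (α ε) ^ 3 * ε ^ b) ∧
    (∀ᶠ ε in nhdsWithin 0 (Set.Ioi 0),
      2 * (α ε) ^ 3 * ε ^ b ≤
        |∫ x₂ in (ε - α ε)..ε, ∫ x₁ in (ε ^ q)..(ε ^ q + α ε),
            4 * x₁ * (x₁ ^ 2 - x₂ ^ b)|) := by
  obtain ⟨k, hk⟩ : ∃ k, b = k + 1 := ⟨b - 1, by omega⟩
  have hbR : (5 : ℝ) ≤ (b : ℝ) := by exact_mod_cast hb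
  have hq1 : 1 < q := by rw [hq]; linarith
  have hεpos : ∀ᶠ ε in nhdsWithin (0:ℝ) (Set.Ioi 0), 0 < ε := by
    filter_upwards [self_mem_nhdsWithin] with ε hε using hε
  have hε1 : ∀ᶠ ε in nhdsWithin (0:ℝ) (Set.Ioi 0), ε < 1 :=
    (eventually_lt_nhds zero_lt_one).filter_mono nhdsWithin_le_nhds
  have hαle : ∀ᶠ ε in nhdsWithin (0:ℝ) (Set.Ioi 0), α ε ≤ ε ^ q := by
    filter_upwards [hα.def one_pos, hεpos] with ε h hε
    have h2 : 0 < ε ^ q := Real.rpow_pos_of_pos hε q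
    calc α ε ≤ |α ε| := le_abs_self _
      _ ≤ 1 * |ε ^ q| := by simpa [Real.norm_eq_abs] using h
      _ = ε ^ q := by rw [one_mul, abs_of_pos h2]
  simp only [int3]
  set m : ℝ → ℝ :=
    fun ε => 4 * (α ε / ε ^ q) + (α ε / ε ^ q) ^ 2 + 6 * ((k : ℝ) + 1) * ε ^ (q - 1)
    with hm_def
  have hm : Tendsto m (nhdsWithin (0:ℝ) (Set.Ioi 0)) (nhds 0) := by
    have t1 : Tendsto (fun ε => α ε / ε ^ q) (nhdsWithin (0:ℝ) (Set.Ioi 0)) (nhds 0) :=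
      hα.tendsto_div_nhds_zero
    have t3 : Tendsto (fun ε : ℝ => ε ^ (q - 1)) (nhdsWithin (0:ℝ) (Set.Ioi 0)) (nhds 0) := by
      have hc : ContinuousAt (fun x : ℝ => x ^ (q - 1)) 0 :=
        Real.continuousAt_rpow_const 0 (q - 1) (Or.inr (by linarith))
      have h0 := hc.tendsto
      rw [Real.zero_rpow (by linarith : q - 1 ≠ 0)] at h0
      exact h0.mono_left nhdsWithin_le_nhds
    have hfin : Tendsto m (nhdsWithin (0:ℝ) (Set.Ioi 0))
        (nhds (4 * 0 + 0 ^ 2 + 6 * ((k : ℝ) + 1) * 0)) :=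
      ((t1.const_mul 4).add (t1.pow 2)).add (t3.const_mul _)
    simpa using hfin
  have hbound : ∀ᶠ ε in nhdsWithin (0:ℝ) (Set.Ioi 0),
      |(((ε ^ q + α ε) ^ 4 - (ε ^ q) ^ 4) * (ε - (ε - α ε))
          - 2 * ((ε ^ q + α ε) ^ 2 - (ε ^ q) ^ 2) * (ε ^ (b + 1) - (ε - α ε) ^ (b + 1))
            / ((b : ℝ) + 1))
        - 4 * (α ε) ^ 3 * ε ^ b| ≤ m ε * ((α ε) ^ 3 * ε ^ b) := by
    filter_upwards [hεpos, hε1, hαle] with ε hε hε1' hle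
    set a := ε ^ q with ha_def
    set A := α ε with hA_def
    have hA0 : 0 < A := hαpos ε hε
    have ha0 : 0 < a := Real.rpow_pos_of_pos hε q
    have haε : a < ε := by
      have := Real.rpow_lt_rpow_of_exponent_gt hε hε1' hq1
      rwa [Real.rpow_one] at this
    have hAε : A < ε := lt_of_le_of_lt hle haε
    have hv : 0 ≤ ε - A := by linarith
    have hvu : ε - A ≤ ε := by linarith
    have hs : a * a = ε ^ b := by
      have h1 : ε ^ q * ε ^ q = ε ^ (q + q) := (Real.rpow_add hε q q).symm
      rw [ha_def, h1, show q + q = (b : ℝ) by rw [hq]; ring, Real.rpow_natCast]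
    have hkey2 : ε ^ (q - 1) * a = (ε : ℝ) ^ k := by
      rw [ha_def, ← Real.rpow_natCast ε k, ← Real.rpow_add hε]
      congr 1
      have : (k : ℝ) = (b : ℝ) - 1 := by rw [hk]; push_cast; ring
      rw [this, hq]; ring
    have hbpos : (0 : ℝ) < (b : ℝ) + 1 := by positivity
    set E := ε ^ (b + 1) - (ε - A) ^ (b + 1) with hE_def
    have hEup : E ≤ ((b : ℝ) + 1) * ε ^ b * A := by
      have h := pow_sub_pow_le_right b hv hvu
      rw [show ε - (ε - A) = A from by ring] at h
      rw [hE_def]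
      exact_mod_cast h
    have hElow : ((b : ℝ) + 1) * (ε - A) ^ b * A ≤ E := by
      have h := pow_sub_pow_ge_left b hv hvu
      rw [show ε - (ε - A) = A from by ring] at h
      rw [hE_def]
      exact_mod_cast h
    have hpowb : ε ^ b - (ε - A) ^ b ≤ ((k : ℝ) + 1) * ε ^ k * A := by
      have h := pow_sub_pow_le_right k hv hvu
      rw [show ε - (ε - A) = A from by ring] at h
      rw [hk]
      exact_mod_cast h
    set δ := E / ((b : ℝ) + 1) - ε ^ b * A with hδ_def
    have hδup : δ ≤ 0 := by
      have h := (div_le_iff₀ hbpos).mpr (by linarith : E ≤ ε ^ b * A * ((b : ℝ) + 1))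
      rw [hδ_def]; linarith
    have hδlow : -(((k : ℝ) + 1) * ε ^ k * A ^ 2) ≤ δ := by
      have h := (le_div_iff₀ hbpos).mpr (by linarith : (ε - A) ^ b * A * ((b : ℝ) + 1) ≤ E)
      have h2 := mul_le_mul_of_nonneg_right hpowb hA0.le
      rw [hδ_def]; nlinarith
    have habs : |δ| ≤ ((k : ℝ) + 1) * ε ^ k * A ^ 2 := by
      rw [abs_le]; constructor
      · exact hδlow
      · have : (0:ℝ) ≤ ((k : ℝ) + 1) * ε ^ k * A ^ 2 := by positivity
        linarith
    have hbne : ((b : ℝ) + 1) ≠ 0 := ne_of_gt hbpos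
    have hid : (((a + A) ^ 4 - a ^ 4) * (ε - (ε - A))
          - 2 * ((a + A) ^ 2 - a ^ 2) * E / ((b : ℝ) + 1)) - 4 * A ^ 3 * ε ^ b
        = 4 * a * A ^ 4 + A ^ 5 - (4 * a * A + 2 * A ^ 2) * δ := by
      have hE : E = ((b : ℝ) + 1) * (ε ^ b * A + δ) := by
        rw [hδ_def]; field_simp; ring
      rw [hE, ← hs]
      field_simp
      ring
    have hme : m ε = 4 * (A / a) + (A / a) ^ 2 + 6 * ((k : ℝ) + 1) * ε ^ (q - 1) := rfl
    have hmg : m ε * (A ^ 3 * ε ^ b)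
        = 4 * a * A ^ 4 + A ^ 5 + 6 * ((k : ℝ) + 1) * (ε ^ (q - 1) * a) * a * A ^ 3 := by
      rw [hme, ← hs]
      field_simp
    rw [hmg, hkey2, hid]
    have htri : |4 * a * A ^ 4 + A ^ 5 - (4 * a * A + 2 * A ^ 2) * δ|
        ≤ (4 * a * A ^ 4 + A ^ 5) + (4 * a * A + 2 * A ^ 2) * |δ| := by
      calc |4 * a * A ^ 4 + A ^ 5 - (4 * a * A + 2 * A ^ 2) * δ|
          ≤ |4 * a * A ^ 4 + A ^ 5| + |(4 * a * A + 2 * A ^ 2) * δ| := abs_sub _ _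
        _ = (4 * a * A ^ 4 + A ^ 5) + (4 * a * A + 2 * A ^ 2) * |δ| := by
            rw [abs_of_pos (by positivity), abs_mul, abs_of_pos (by positivity)]
    have hδterm : (4 * a * A + 2 * A ^ 2) * |δ|
        ≤ 6 * ((k : ℝ) + 1) * ε ^ k * a * A ^ 3 := by
      have h1 : (4 * a * A + 2 * A ^ 2) ≤ 6 * a * A := by nlinarith
      have h2 : (0:ℝ) ≤ |δ| := abs_nonneg _
      nlinarith [mul_le_mul h1 habs h2 (by positivity : (0:ℝ) ≤ 6 * a * A)]
    calc |4 * a * A ^ 4 + A ^ 5 - (4 * a * A + 2 * A ^ 2) * δ|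
        ≤ (4 * a * A ^ 4 + A ^ 5) + (4 * a * A + 2 * A ^ 2) * |δ| := htri
      _ ≤ 4 * a * A ^ 4 + A ^ 5 + 6 * ((k : ℝ) + 1) * ε ^ k * a * A ^ 3 := by linarith
  have h1 : (fun ε : ℝ =>
        (((ε ^ q + α ε) ^ 4 - (ε ^ q) ^ 4) * (ε - (ε - α ε))
          - 2 * ((ε ^ q + α ε) ^ 2 - (ε ^ q) ^ 2) * (ε ^ (b + 1) - (ε - α ε) ^ (b + 1))
            / ((b : ℝ) + 1))
        - 4 * (α ε) ^ 3 * ε ^ b)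
      =o[nhdsWithin (0:ℝ) (Set.Ioi 0)] fun ε : ℝ => (α ε) ^ 3 * ε ^ b := by
    rw [isLittleO_iff]
    intro c hc
    filter_upwards [hbound, hm.eventually_lt_const hc, hεpos] with ε hb' hmc hε
    have hg0 : 0 < (α ε) ^ 3 * ε ^ b := by
      have := hαpos ε hε; positivity
    rw [Real.norm_eq_abs, Real.norm_eq_abs, abs_of_pos hg0]
    calc |_| ≤ m ε * ((α ε) ^ 3 * ε ^ b) := hb'
      _ ≤ c * ((α ε) ^ 3 * ε ^ b) := mul_le_mul_of_nonneg_right hmc.le hg0.le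
  have hO : (fun ε : ℝ =>
        |(((ε ^ q + α ε) ^ 4 - (ε ^ q) ^ 4) * (ε - (ε - α ε))
          - 2 * ((ε ^ q + α ε) ^ 2 - (ε ^ q) ^ 2) * (ε ^ (b + 1) - (ε - α ε) ^ (b + 1))
            / ((b : ℝ) + 1))|
        - 4 * (α ε) ^ 3 * ε ^ b)
      =O[nhdsWithin (0:ℝ) (Set.Ioi 0)] (fun ε : ℝ =>
        (((ε ^ q + α ε) ^ 4 - (ε ^ q) ^ 4) * (ε - (ε - α ε))
          - 2 * ((ε ^ q + α ε) ^ 2 - (ε ^ q) ^ 2) * (ε ^ (b + 1) - (ε - α ε) ^ (b + 1))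
            / ((b : ℝ) + 1))
        - 4 * (α ε) ^ 3 * ε ^ b) := by
    rw [isBigO_iff]
    refine ⟨1, ?_⟩
    filter_upwards [hεpos] with ε hε
    set x := (((ε ^ q + α ε) ^ 4 - (ε ^ q) ^ 4) * (ε - (ε - α ε))
          - 2 * ((ε ^ q + α ε) ^ 2 - (ε ^ q) ^ 2) * (ε ^ (b + 1) - (ε - α ε) ^ (b + 1))
            / ((b : ℝ) + 1)) with hx
    set t := 4 * (α ε) ^ 3 * ε ^ b with ht
    have ht0 : 0 ≤ t := by
      have := hαpos ε hε; rw [ht]; positivity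
    rw [one_mul, Real.norm_eq_abs, Real.norm_eq_abs]
    have h1' := abs_sub_abs_le_abs_sub x t
    have h2' := abs_sub_abs_le_abs_sub t x
    rw [abs_sub_comm t x] at h2'
    rw [abs_of_nonneg ht0] at h1' h2'
    rw [abs_le]
    constructor <;> linarith [neg_abs_le (x - t), le_abs_self (x - t)]
  refine ⟨hO.trans_isLittleO h1, ?_⟩
  have h2 := isLittleO_iff.mp (hO.trans_isLittleO h1) one_half_pos
  filter_upwards [h2, hεpos] with ε h hε
  have hg0 : 0 < (α ε) ^ 3 * ε ^ b := by
    have := hαpos ε hε; positivity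
  rw [Real.norm_eq_abs, Real.norm_eq_abs, abs_of_pos hg0, abs_le] at h
  linarith [h.1]
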